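/- In the Heisenberg/Fock quantization with cocycle C defined by C(p_α², q_α²) = 2, C(p_α p_β, q_α q_β) = 1 for α ≠ β, and C = 0 on all other pairs of quadratic Darboux monomials: for the quadratic Hamiltonians h_{l_{−1}}(f) = −∑_{r,α} q_r^α p_{r−1}^α − (1/2)∑_{α,β} η_{αβ} q_0^α q_0^β and h_{z^{2k−1}}(f) = −∑_{r,α} q_r^α p_{r+2k−1}^α + (1/2)∑_{i,α,β} (−1)^i η^{αβ} p_i^α p_{2k−2−i}^β (sum over 0 ≤ i ≤ 2k−2), the cocycle evaluates to C(h_{l_{−1}}, h_{z^{2k−1}}) = (1/2) δ_{k,1} · ∑_α η_{αα'} η^{αα'}-trace = (1/2) δ_{k,1} N, where N = dim 𝕍 = tr(η η^{-1}) (interpreted as χ(X) in the geometric setting). -/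

import Mathlib

/-- cocycle evaluation: let `C` be the cocycle on quadratic Darboux
monomials, determined on a pair (q-monomial, p-monomial) by
`C(q_{m}^α q_{n}^β, p_{m'}^{α'} p_{n'}^{β'})
  = -[ (m,α)=(m',α') ∧ (n,β)=(n',β') ] - [ (m,α)=(n',β') ∧ (n,β)=(m',α') ]`
(so that `C(p_α², q_α²) = 2`, `C(p_α p_β, q_α q_β) = 1` for `α ≠ β`, and `C = 0`
otherwise). Then for the quadratic Hamiltonians `h_{l_{-1}}` and `h_{z^{2k-1}}`,
the cocycle pairing
`-(1/4) ∑_{i=0}^{2k-2} ∑_{α,β,α',β'} η_{αβ} (-1)^i η^{α'β'}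
  C(q_0^α q_0^β, p_i^{α'} p_{2k-2-i}^{β'}) = (1/2) δ_{k,1} N`,
where `N = tr(η η⁻¹) = dim 𝕍` (interpreted as `χ(X)` geometrically). -/
theorem stmt_17 (I : Type*) [Fintype I] [DecidableEq I]
    (eta etaInv : I → I → ℂ)
    (hsym : ∀ α β, eta α β = eta β α)
    (hsymInv : ∀ α β, etaInv α β = etaInv β α)
    (hInv : ∀ α γ, ∑ β, eta α β * etaInv β γ = if α = γ then 1 else 0)
    (C : (ℕ × I) → (ℕ × I) → (ℕ × I) → (ℕ × I) → ℂ)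
    (hC : ∀ a b c d : ℕ × I,
        C a b c d = (if a = c ∧ b = d then -1 else 0)
          + (if a = d ∧ b = c then -1 else 0))
    (k : ℕ) (hk : 1 ≤ k) :
    -(4 : ℂ)⁻¹ * ∑ i ∈ Finset.range (2 * k - 1), ∑ α, ∑ β, ∑ α', ∑ β',
        eta α β * (-1 : ℂ) ^ i * etaInv α' β' *
          C (0, α) (0, β) (i, α') (2 * k - 2 - i, β')
      = (2 : ℂ)⁻¹ * (if k = 1 then 1 else 0) * ∑ α, ∑ β, eta α β * etaInv α β
      ∧ ∑ α, ∑ β, eta α β * etaInv α β = (Fintype.card I : ℂ) := by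
  have htr : ∑ α, ∑ β, eta α β * etaInv α β = (Fintype.card I : ℂ) := by
    have h1 : ∀ α : I, ∑ β, eta α β * etaInv α β = 1 := by
      intro α
      have h := hInv α α
      simp only [if_true, eq_self_iff_true] at h
      rw [← h]
      exact Finset.sum_congr rfl fun β _ => by rw [hsymInv]
    simp [h1, Finset.card_univ]
  refine ⟨?_, htr⟩
  rcases eq_or_lt_of_le hk with h1 | h2
  · -- k = 1
    subst h1
    rw [if_pos rfl]
    have hr : (2 * 1 - 1 : ℕ) = 1 := rfl
    rw [hr, Finset.sum_range_one]
    have hterm : ∀ α β : I, ∑ α', ∑ β',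
        eta α β * (-1 : ℂ) ^ 0 * etaInv α' β' *
          C (0, α) (0, β) (0, α') (2 * 1 - 2 - 0, β')
        = -2 * (eta α β * etaInv α β) := by
      intro α β
      have h2 : (2 * 1 - 2 - 0 : ℕ) = 0 := rfl
      simp only [h2, hC, Prod.mk.injEq, true_and, pow_zero, mul_one, mul_add,
        Finset.sum_add_distrib, mul_ite, mul_neg, mul_zero, ite_and,
        Finset.sum_ite_eq, Finset.mem_univ, if_true]
      have haux : (∑ x : I, ∑ x_1 : I, if α = x then if β = x_1
          then -(eta α β * etaInv x x_1) else 0 else 0)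
          = -(eta α β * etaInv α β) := by
        rw [Finset.sum_comm]
        simp [Finset.sum_ite_eq]
      rw [haux, hsymInv β α]
      ring
    rw [Finset.sum_congr rfl fun α _ => Finset.sum_congr rfl fun β _ => hterm α β]
    simp only [← Finset.mul_sum]
    ring
  · -- k ≥ 2
    have hk2 : 2 ≤ k := h2
    rw [if_neg (by omega)]
    have hz : ∀ i ∈ Finset.range (2 * k - 1), (∑ α, ∑ β, ∑ α', ∑ β',
        eta α β * (-1 : ℂ) ^ i * etaInv α' β' *
          C (0, α) (0, β) (i, α') (2 * k - 2 - i, β')) = 0 := by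
      intro i hi
      apply Finset.sum_eq_zero; intro α _
      apply Finset.sum_eq_zero; intro β _
      apply Finset.sum_eq_zero; intro α' _
      apply Finset.sum_eq_zero; intro β' _
      rw [hC]
      rw [if_neg, if_neg]
      · ring
      · rintro ⟨ha, hb⟩
        have e1 : 0 = 2 * k - 2 - i := congrArg Prod.fst ha
        have e2 : 0 = i := congrArg Prod.fst hb
        omega
      · rintro ⟨ha, hb⟩
        have e1 : 0 = i := congrArg Prod.fst ha
        have e2 : 0 = 2 * k - 2 - i := congrArg Prod.fst hb
        omega
    rw [Finset.sum_eq_zero hz]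
    ring
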